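/- With the same scheduling process as above (nondecreasing random sequence ℓ₁ ≤ … ≤ ℓ_H in {1,…,L}, transition probability from f to ℓ > f equal to 2^{−(ℓ−f)}/(2ℓH)), for every fixed ℓ ∈ {1,…,L}: Pr[ℓ_H = ℓ] ≥ 2^{−ℓ}/(2Hℓ). -/

import Mathlib

lemma geom_tail (a : ℕ) : ∀ b : ℕ, a ≤ b →
    ∑ x ∈ Finset.Icc (a+1) b, (2:ℝ)^(-(x:ℤ)) ≤ (2:ℝ)^(-(a:ℤ)) - (2:ℝ)^(-(b:ℤ)) := by
  intro b hb
  induction b, hb using Nat.le_induction with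
  | base => simp [Finset.Icc_eq_empty_of_lt (Nat.lt_succ_self a)]
  | succ b hb ih =>
    rw [Finset.sum_Icc_succ_top (by omega : a+1 ≤ b+1)]
    have h2 : (2:ℝ)^(-((b:ℤ)+1)) = (2:ℝ)^(-(b:ℤ)) / 2 := by
      rw [neg_add, zpow_add₀ (two_ne_zero)]; norm_num; ring
    push_cast
    rw [h2]
    linarith

lemma out_bound (H L m : ℕ) (hH : 1 ≤ H) (hm : 1 ≤ m) :
    ∑ ℓ' ∈ Finset.Icc (m+1) L, (2:ℝ)^(-((ℓ':ℤ)-(m:ℤ)))/(2*ℓ'*H) ≤ 1/(2*H) := by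
  have hHpos : (0:ℝ) < H := by exact_mod_cast hH
  have step1 : ∑ ℓ' ∈ Finset.Icc (m+1) L, (2:ℝ)^(-((ℓ':ℤ)-(m:ℤ)))/(2*ℓ'*H)
      ≤ ∑ ℓ' ∈ Finset.Icc (m+1) L, (2:ℝ)^((m:ℤ)) * (2:ℝ)^(-(ℓ':ℤ)) / (2*H) := by
    apply Finset.sum_le_sum
    intro ℓ' hℓ'
    have hℓ1 : (1:ℝ) ≤ ℓ' := by
      have := (Finset.mem_Icc.mp hℓ').1; exact_mod_cast by omega
    have hz : (2:ℝ)^(-((ℓ':ℤ)-(m:ℤ))) = (2:ℝ)^((m:ℤ)) * (2:ℝ)^(-(ℓ':ℤ)) := by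
      rw [← zpow_add₀ (two_ne_zero)]; ring_nf
    rw [hz]
    apply div_le_div_of_nonneg_left (by positivity) (by positivity)
    nlinarith
  refine step1.trans ?_
  rw [← Finset.sum_div, ← Finset.mul_sum]
  rcases le_or_gt m L with hmL | hmL
  · have := geom_tail m L hmL
    have hpos : (0:ℝ) < (2:ℝ)^(-(L:ℤ)) := by positivity
    have h1 : (2:ℝ)^((m:ℤ)) * ∑ ℓ' ∈ Finset.Icc (m+1) L, (2:ℝ)^(-(ℓ':ℤ)) ≤ 1 := by
      have hmpos : (0:ℝ) < (2:ℝ)^((m:ℤ)) := by positivity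
      have : (2:ℝ)^((m:ℤ)) * ((2:ℝ)^(-(m:ℤ)) - (2:ℝ)^(-(L:ℤ))) ≤ 1 := by
        have : (2:ℝ)^((m:ℤ)) * (2:ℝ)^(-(m:ℤ)) = 1 := by
          rw [← zpow_add₀ (two_ne_zero)]; simp
        nlinarith
      nlinarith
    gcongr
  · rw [Finset.Icc_eq_empty_of_lt (by omega)]
    simp

/-- Scheduling lower bound: with the same nondecreasing learner-schedule Markov
    chain `P h f` on `{1,…,L}` (jump from `f` to `ℓ > f` with probability
    `2^{−(ℓ−f)}/(2ℓH)`, stay otherwise), for every `ℓ ∈ {1,…,L}`,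
    `P H ℓ ≥ 2^{−ℓ}/(2Hℓ)`. -/
theorem schedule_prob_lower (H L : ℕ) (hH : 1 ≤ H) (hL : 1 ≤ L)
    (P : ℕ → ℕ → ℝ)
    (hinit : ∀ f, P 0 f = if f = 1 then 1 else 0)
    (hstep : ∀ h : ℕ, ∀ ℓ ∈ Finset.Icc 1 L,
      P (h + 1) ℓ =
        P h ℓ * (1 - ∑ ℓ' ∈ Finset.Icc (ℓ + 1) L,
            (2 : ℝ) ^ (-((ℓ' : ℤ) - (ℓ : ℤ))) / (2 * ℓ' * H))
        + ∑ f ∈ Finset.Icc 1 (ℓ - 1),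
            P h f * ((2 : ℝ) ^ (-((ℓ : ℤ) - (f : ℤ))) / (2 * ℓ * H))) :
    ∀ ℓ ∈ Finset.Icc 1 L, (2 : ℝ) ^ (-(ℓ : ℤ)) / (2 * H * ℓ) ≤ P H ℓ := by
  obtain ⟨K, rfl⟩ : ∃ K, H = K + 1 := ⟨H - 1, by omega⟩
  intro ℓ hℓ
  obtain ⟨hℓ1, hℓL⟩ := Finset.mem_Icc.mp hℓ
  obtain ⟨m, rfl⟩ : ∃ m, ℓ = m + 1 := ⟨ℓ - 1, by omega⟩
  have hHpos : (0:ℝ) < ((K:ℝ) + 1) := by positivity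
  have hmpos : (0:ℝ) < ((m:ℝ) + 1) := by positivity
  -- nonnegativity of P on the state space
  have hPnn : ∀ h, ∀ f ∈ Finset.Icc 1 L, 0 ≤ P h f := by
    intro h
    induction h with
    | zero => intro f hf; rw [hinit]; split <;> norm_num
    | succ h ih =>
      intro f hf
      obtain ⟨hf1, hfL⟩ := Finset.mem_Icc.mp hf
      rw [hstep h f hf]
      have hout := out_bound (K+1) L f hH hf1
      have hH1 : 1/(2*((K:ℝ)+1)) ≤ 1 := by
        rw [div_le_one (by positivity)]; nlinarith
      push_cast at hout
      have t1 : 0 ≤ P h f * (1 - ∑ ℓ' ∈ Finset.Icc (f+1) L,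
          (2:ℝ)^(-((ℓ':ℤ)-(f:ℤ)))/(2*ℓ'*((K:ℕ)+1:ℕ))) := by
        apply mul_nonneg (ih f hf)
        push_cast
        linarith
      have t2 : 0 ≤ ∑ g ∈ Finset.Icc 1 (f-1),
          P h g * ((2:ℝ)^(-((f:ℤ)-(g:ℤ)))/(2*f*((K:ℕ)+1:ℕ))) := by
        apply Finset.sum_nonneg
        intro g hg
        obtain ⟨hg1, hg2⟩ := Finset.mem_Icc.mp hg
        have hgP := ih g (Finset.mem_Icc.mpr ⟨hg1, by omega⟩)
        have hfpos : (0:ℝ) < f := by exact_mod_cast hf1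
        have : (0:ℝ) < ((K:ℕ)+1:ℕ) := by exact_mod_cast hH
        positivity
      linarith
  -- mass in [1, m+1] shrinks by at most factor (1 - 1/(2(K+1))) per step
  set q : ℝ := 1 - 1/(2*((K:ℝ)+1)) with hqdef
  have hq0 : 0 ≤ q := by
    have : 1/(2*((K:ℝ)+1)) ≤ 1 := by rw [div_le_one (by positivity)]; nlinarith
    simp only [hqdef]; linarith
  have hSpow : ∀ h, q ^ h ≤ ∑ f ∈ Finset.Icc 1 (m+1), P h f := by
    intro h
    induction h with
    | zero =>
      simp only [pow_zero, hinit]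
      rw [Finset.sum_ite_eq' (Finset.Icc 1 (m+1)) 1 (fun _ => (1:ℝ))]
      simp
    | succ h ih =>
      have hstep2 : q * (∑ f ∈ Finset.Icc 1 (m+1), P h f)
          ≤ ∑ f ∈ Finset.Icc 1 (m+1), P (h+1) f := by
        rw [Finset.mul_sum]
        apply Finset.sum_le_sum
        intro f hf
        obtain ⟨hf1, hf2⟩ := Finset.mem_Icc.mp hf
        have hfL : f ∈ Finset.Icc 1 L := Finset.mem_Icc.mpr ⟨hf1, by omega⟩
        rw [hstep h f hfL]
        have hout := out_bound (K+1) L f hH hf1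
        push_cast at hout
        have hPnn' := hPnn h f hfL
        have t2 : 0 ≤ ∑ g ∈ Finset.Icc 1 (f-1),
            P h g * ((2:ℝ)^(-((f:ℤ)-(g:ℤ)))/(2*f*((K:ℕ)+1:ℕ))) := by
          apply Finset.sum_nonneg
          intro g hg
          obtain ⟨hg1, hg2⟩ := Finset.mem_Icc.mp hg
          have hgP := hPnn h g (Finset.mem_Icc.mpr ⟨hg1, by omega⟩)
          have hfpos : (0:ℝ) < f := by exact_mod_cast hf1
          have : (0:ℝ) < ((K:ℕ)+1:ℕ) := by exact_mod_cast hH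
          positivity
        have hq' : q * P h f ≤ P h f * (1 - ∑ ℓ' ∈ Finset.Icc (f+1) L,
            (2:ℝ)^(-((ℓ':ℤ)-(f:ℤ)))/(2*ℓ'*((K:ℕ)+1:ℕ))) := by
          rw [mul_comm]
          apply mul_le_mul_of_nonneg_left _ hPnn'
          simp only [hqdef]
          push_cast
          linarith
        linarith
      calc q ^ (h+1) = q * q ^ h := by ring
        _ ≤ q * ∑ f ∈ Finset.Icc 1 (m+1), P h f := by
            apply mul_le_mul_of_nonneg_left ih hq0
        _ ≤ _ := hstep2
  -- the mass at time K is at least 1/2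
  have hhalf : (1/2 : ℝ) ≤ ∑ f ∈ Finset.Icc 1 (m+1), P K f := by
    refine le_trans ?_ (hSpow K)
    have hle1 : 1/(2*((K:ℝ)+1)) ≤ 1 := by
      rw [div_le_one (by positivity)]; nlinarith [Nat.cast_nonneg (α := ℝ) K]
    have h1 : 1 + (K:ℝ) * (-(1/(2*((K:ℝ)+1)))) ≤ (1 + (-(1/(2*((K:ℝ)+1))))) ^ K := by
      apply one_add_mul_le_pow
      linarith
    have h2 : (1:ℝ)/2 ≤ 1 + (K:ℝ) * (-(1/(2*((K:ℝ)+1)))) := by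
      have hK0 : (0:ℝ) ≤ K := Nat.cast_nonneg K
      have ht0 : 0 ≤ 1/(2*((K:ℝ)+1)) := by positivity
      have hinv : (1/(2*((K:ℝ)+1))) * (2*((K:ℝ)+1)) = 1 := by field_simp
      nlinarith
    have h3 : (1 + (-(1/(2*((K:ℝ)+1))))) ^ K = q ^ K := by
      simp only [hqdef]; ring_nf
    linarith [h3 ▸ h1]
  -- final step: every transition coefficient into m+1 is at least c := 2^{-(m+1)}/((m+1)(K+1))
  set c : ℝ := (2:ℝ)^(-((m:ℤ)+1)) / (((m:ℝ)+1) * ((K:ℝ)+1)) with hcdef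
  have hc0 : 0 ≤ c := by positivity
  have hpow_half : (2:ℝ)^(-((m:ℤ)+1)) ≤ 1/2 := by
    have := zpow_le_zpow_right₀ (by norm_num : (1:ℝ) ≤ 2) (by omega : -((m:ℤ)+1) ≤ -1)
    simpa using this
  have hc_half : c ≤ 1/2 := by
    have h1 : (1:ℝ) ≤ ((m:ℝ)+1) * ((K:ℝ)+1) := by
      nlinarith [Nat.cast_nonneg (α := ℝ) m, Nat.cast_nonneg (α := ℝ) K]
    calc c ≤ (2:ℝ)^(-((m:ℤ)+1)) := div_le_self (by positivity) h1
      _ ≤ 1/2 := hpow_half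
  have hfc : ∀ f : ℕ, 1 ≤ f →
      c ≤ (2:ℝ)^(-(((m+1:ℕ):ℤ)-(f:ℤ)))/(2*((m+1:ℕ):ℝ)*((K+1:ℕ):ℝ)) := by
    intro f hf
    have hmono : 2*(2:ℝ)^(-((m:ℤ)+1)) ≤ (2:ℝ)^(-(((m+1:ℕ):ℤ)-(f:ℤ))) := by
      have h := zpow_le_zpow_right₀ (by norm_num : (1:ℝ) ≤ 2)
        (show -((m:ℤ)+1)+1 ≤ -(((m+1:ℕ):ℤ)-(f:ℤ)) by push_cast; omega)
      rw [zpow_add₀ (two_ne_zero)] at h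
      simpa [mul_comm] using h
    have hceq : c = 2*(2:ℝ)^(-((m:ℤ)+1)) / (2*((m:ℝ)+1)*((K:ℝ)+1)) := by
      rw [hcdef]; field_simp
    rw [hceq]
    push_cast at hmono ⊢
    gcongr
  have hstepH := hstep K (m+1) hℓ
  simp only [Nat.add_sub_cancel] at hstepH
  have hout2 := out_bound (K+1) L (m+1) hH (by omega)
  have hKcast : (1:ℝ) ≤ ((K+1:ℕ):ℝ) := by exact_mod_cast hH
  have hOhalf : (∑ ℓ' ∈ Finset.Icc (m+1+1) L,
      (2:ℝ)^(-((ℓ':ℤ)-((m+1:ℕ):ℤ)))/(2*(ℓ':ℝ)*((K+1:ℕ):ℝ))) ≤ 1/2 := by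
    refine hout2.trans ?_
    rw [div_le_div_iff₀ (by positivity) (by norm_num)]
    nlinarith
  have hB : c * P K (m+1) ≤ P K (m+1) * (1 - ∑ ℓ' ∈ Finset.Icc (m+1+1) L,
      (2:ℝ)^(-((ℓ':ℤ)-((m+1:ℕ):ℤ)))/(2*(ℓ':ℝ)*((K+1:ℕ):ℝ))) := by
    rw [mul_comm]
    apply mul_le_mul_of_nonneg_left _ (hPnn K (m+1) hℓ)
    linarith
  have hA : ∀ f ∈ Finset.Icc 1 m, c * P K f ≤
      P K f * ((2:ℝ)^(-(((m+1:ℕ):ℤ)-(f:ℤ)))/(2*((m+1:ℕ):ℝ)*((K+1:ℕ):ℝ))) := by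
    intro f hf
    obtain ⟨hf1, hf2⟩ := Finset.mem_Icc.mp hf
    rw [mul_comm]
    exact mul_le_mul_of_nonneg_left (hfc f hf1)
      (hPnn K f (Finset.mem_Icc.mpr ⟨hf1, by omega⟩))
  have hsum := Finset.sum_le_sum hA
  rw [← Finset.mul_sum] at hsum
  have hsplit : ∑ f ∈ Finset.Icc 1 (m+1), P K f
      = (∑ f ∈ Finset.Icc 1 m, P K f) + P K (m+1) :=
    Finset.sum_Icc_succ_top (by omega) _
  rw [hstepH]
  have hmul : c * (1/2) ≤ c * ∑ f ∈ Finset.Icc 1 (m+1), P K f :=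
    mul_le_mul_of_nonneg_left hhalf hc0
  have heq : (2:ℝ)^(-(((m+1:ℕ)):ℤ))/(2*((K+1:ℕ):ℝ)*((m+1:ℕ):ℝ)) = c * (1/2) := by
    rw [hcdef]; push_cast; field_simp
  refine le_trans (le_of_eq heq) (hmul.trans ?_)
  rw [hsplit, mul_add]
  linarith
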